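/- Let u, v ∈ ℂ² be unit vectors with 0 < |⟨u, v⟩| < 1. Then the density matrix ρ = (3/5) (u u*) ⊗ (|0⟩⟨0|) + (2/5) (v v*) ⊗ (|1⟩⟨1|) on ℂ² ⊗ ℂ² is not classical-quantum. (The ability to produce just two non-orthogonal states of subsystem A suffices to create nonzero quantum discord.) -/

import Mathlib

open Matrix Kronecker BigOperators ComplexOrder

noncomputable section

/-- Partial trace over the second factor. -/
def trB {m n : ℕ} (ρ : Matrix (Fin m × Fin n) (Fin m × Fin n) ℂ) :
    Matrix (Fin m) (Fin m) ℂ :=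
  fun i j => ∑ k : Fin n, ρ (i, k) (j, k)

/-- Partial trace over the first factor. -/
def trA {m n : ℕ} (ρ : Matrix (Fin m × Fin n) (Fin m × Fin n) ℂ) :
    Matrix (Fin n) (Fin n) ℂ :=
  fun k l => ∑ i : Fin m, ρ (i, k) (i, l)

/-- A density matrix: positive semidefinite with trace 1. -/
def IsDensityMatrix {d : Type*} [Fintype d] [DecidableEq d] (ρ : Matrix d d ℂ) : Prop :=
  ρ.PosSemidef ∧ ρ.trace = 1

/-- An orthonormal basis of ℂ^m, given as a family of m vectors. -/
def IsONB {m : ℕ} (e : Fin m → Fin m → ℂ) : Prop :=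
  ∀ i j, star (e i) ⬝ᵥ e j = if i = j then 1 else 0

/-- The rank-one matrix v v*, with entries v j * conj (v k). -/
def proj {m : ℕ} (v : Fin m → ℂ) : Matrix (Fin m) (Fin m) ℂ :=
  vecMulVec v (star v)

/-- A classical-quantum (zero-discord) state: ρ = ∑ i (eᵢ eᵢ*) ⊗ σᵢ for an
orthonormal basis e of ℂ^m and positive semidefinite σᵢ. -/
def ClassicalQuantum {m n : ℕ} (ρ : Matrix (Fin m × Fin n) (Fin m × Fin n) ℂ) : Prop :=
  ∃ e : Fin m → Fin m → ℂ, IsONB e ∧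
    ∃ σ : Fin m → Matrix (Fin n) (Fin n) ℂ,
      (∀ i, (σ i).PosSemidef) ∧ ρ = ∑ i, proj (e i) ⊗ₖ σ i

/-- A pure state: ρ = ψψ* for a unit vector ψ. -/
def IsPure {d : ℕ} (ρ : Matrix (Fin d) (Fin d) ℂ) : Prop :=
  ∃ ψ : Fin d → ℂ, star ψ ⬝ᵥ ψ = 1 ∧ ρ = vecMulVec ψ (star ψ)

theorem stmt8 (u v : Fin 2 → ℂ)
    (hu : star u ⬝ᵥ u = 1) (hv : star v ⬝ᵥ v = 1)
    (h0 : 0 < ‖star u ⬝ᵥ v‖) (h1 : ‖star u ⬝ᵥ v‖ < 1) :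
    ¬ ClassicalQuantum
      ((3 / 5 : ℂ) • (proj u ⊗ₖ (!![1, 0; 0, 0] : Matrix (Fin 2) (Fin 2) ℂ)) +
        (2 / 5 : ℂ) • (proj v ⊗ₖ (!![0, 0; 0, 1] : Matrix (Fin 2) (Fin 2) ℂ))) := by
  rintro ⟨e, he, σ, -, hρ⟩
  set C := starRingEnd ℂ with hC
  have Cmul : ∀ x y : ℂ, C (x * y) = C x * C y := fun x y => map_mul (starRingEnd ℂ) x y
  have Cadd : ∀ x y : ℂ, C (x + y) = C x + C y := fun x y => map_add (starRingEnd ℂ) x y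
  have CC : ∀ x : ℂ, C (C x) = x := fun x => Complex.conj_conj x
  have C1 : C 1 = 1 := RingHom.map_one C
  have C0 : C 0 = 0 := RingHom.map_zero C
  -- block entry equations
  have A : ∀ i j : Fin 2, (3/5 : ℂ) * (u i * C (u j)) =
      e 0 i * C (e 0 j) * σ 0 0 0 + e 1 i * C (e 1 j) * σ 1 0 0 := by
    intro i j
    have := congrFun (congrFun hρ (i, 0)) (j, 0)
    simpa [proj, vecMulVec_apply, Matrix.sum_apply, Fin.sum_univ_two] using this
  have B : ∀ i j : Fin 2, (2/5 : ℂ) * (v i * C (v j)) =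
      e 0 i * C (e 0 j) * σ 0 1 1 + e 1 i * C (e 1 j) * σ 1 1 1 := by
    intro i j
    have := congrFun (congrFun hρ (i, 1)) (j, 1)
    simpa [proj, vecMulVec_apply, Matrix.sum_apply, Fin.sum_univ_two] using this
  -- ONB equations, scalar form
  have o : ∀ i j : Fin 2, C (e i 0) * e j 0 + C (e i 1) * e j 1 = if i = j then 1 else 0 := by
    intro i j
    have := he i j
    simpa [dotProduct, Fin.sum_univ_two] using this
  -- conjugated ONB equations
  have oc : ∀ i j : Fin 2, e i 0 * C (e j 0) + e i 1 * C (e j 1) = if i = j then 1 else 0 := by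
    intro i j
    have := congrArg C (o i j)
    simp only [Cadd, Cmul, CC, apply_ite C, C1, C0] at this
    simpa using this
  -- completeness
  have comp : ∀ j l : Fin 2, C (e 0 j) * e 0 l + C (e 1 j) * e 1 l = if j = l then 1 else 0 := by
    have hE : (Matrix.of e) * (Matrix.of e)ᴴ = 1 := by
      ext i k
      have := oc i k
      simpa [Matrix.mul_apply, Matrix.conjTranspose_apply, Fin.sum_univ_two,
        Matrix.one_apply, Matrix.of_apply] using this
    have hE' : (Matrix.of e)ᴴ * (Matrix.of e) = 1 := mul_eq_one_comm.mp hE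
    intro j l
    have := congrFun (congrFun hE' j) l
    simpa [Matrix.mul_apply, Matrix.conjTranspose_apply, Fin.sum_univ_two,
      Matrix.one_apply, Matrix.of_apply] using this
  -- conjugated completeness
  have compc : ∀ j l : Fin 2, e 0 j * C (e 0 l) + e 1 j * C (e 1 l) = if j = l then 1 else 0 := by
    intro j l
    have := congrArg C (comp j l)
    simp only [Cadd, Cmul, CC, apply_ite C, C1, C0] at this
    simpa using this
  -- coefficients of u, v in basis e
  set c0 := C (e 0 0) * u 0 + C (e 0 1) * u 1 with hc0
  set c1 := C (e 1 0) * u 0 + C (e 1 1) * u 1 with hc1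
  set d0 := C (e 0 0) * v 0 + C (e 0 1) * v 1 with hd0
  set d1 := C (e 1 0) * v 0 + C (e 1 1) * v 1 with hd1
  have oc10 := oc 1 0; have o01 := o 0 1
  rw [if_neg (by decide : (1:Fin 2) ≠ 0)] at oc10
  rw [if_neg (by decide : (0:Fin 2) ≠ 1)] at o01
  -- off-diagonal vanishing
  have hcz : c0 * C c1 = 0 := by
    have A00 := A 0 0; have A01 := A 0 1; have A10 := A 1 0; have A11 := A 1 1
    simp only [hc0, hc1, Cadd, Cmul, CC]
    linear_combination (5/3 : ℂ) * ((C (e 0 0) * e 1 0) * A00 + (C (e 0 0) * e 1 1) * A01 +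
        (C (e 0 1) * e 1 0) * A10 + (C (e 0 1) * e 1 1) * A11)
      + (5/3 : ℂ) * σ 0 0 0 * (C (e 0 0) * e 0 0 + C (e 0 1) * e 0 1) * oc10
      + (5/3 : ℂ) * σ 1 0 0 * (e 1 0 * C (e 1 0) + e 1 1 * C (e 1 1)) * o01
  have hdz : d0 * C d1 = 0 := by
    have B00 := B 0 0; have B01 := B 0 1; have B10 := B 1 0; have B11 := B 1 1
    simp only [hd0, hd1, Cadd, Cmul, CC]
    linear_combination (5/2 : ℂ) * ((C (e 0 0) * e 1 0) * B00 + (C (e 0 0) * e 1 1) * B01 +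
        (C (e 0 1) * e 1 0) * B10 + (C (e 0 1) * e 1 1) * B11)
      + (5/2 : ℂ) * σ 0 1 1 * (C (e 0 0) * e 0 0 + C (e 0 1) * e 0 1) * oc10
      + (5/2 : ℂ) * σ 1 1 1 * (e 1 0 * C (e 1 0) + e 1 1 * C (e 1 1)) * o01
  -- Parseval / expansion identities
  have p00 := compc 0 0; have p01 := compc 0 1; have p10 := compc 1 0; have p11 := compc 1 1
  rw [if_pos rfl] at p00 p11
  rw [if_neg (by decide : (0:Fin 2) ≠ 1)] at p01
  rw [if_neg (by decide : (1:Fin 2) ≠ 0)] at p10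
  have hu' : C (u 0) * u 0 + C (u 1) * u 1 = 1 := by
    simpa [dotProduct, Fin.sum_univ_two] using hu
  have hv' : C (v 0) * v 0 + C (v 1) * v 1 = 1 := by
    simpa [dotProduct, Fin.sum_univ_two] using hv
  have huv : star u ⬝ᵥ v = C c0 * d0 + C c1 * d1 := by
    simp only [dotProduct, Fin.sum_univ_two, Pi.star_apply, RCLike.star_def, ← hC,
      hc0, hc1, hd0, hd1, Cadd, Cmul, CC]
    linear_combination (- C (u 0) * v 0) * p00 + (- C (u 0) * v 1) * p01
      + (- C (u 1) * v 0) * p10 + (- C (u 1) * v 1) * p11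
  have huu : (1 : ℂ) = C c0 * c0 + C c1 * c1 := by
    simp only [hc0, hc1, Cadd, Cmul, CC]
    linear_combination -hu' + (- C (u 0) * u 0) * p00 + (- C (u 0) * u 1) * p01
      + (- C (u 1) * u 0) * p10 + (- C (u 1) * u 1) * p11
  have hvv : (1 : ℂ) = C d0 * d0 + C d1 * d1 := by
    simp only [hd0, hd1, Cadd, Cmul, CC]
    linear_combination -hv' + (- C (v 0) * v 0) * p00 + (- C (v 0) * v 1) * p01
      + (- C (v 1) * v 0) * p10 + (- C (v 1) * v 1) * p11
  -- case analysis
  have habs : ∀ z : ℂ, C z * z = 1 → ‖z‖ = 1 := by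
    intro z hz
    rw [mul_comm, hC, Complex.mul_conj] at hz
    have h2 : Complex.normSq z = 1 := by exact_mod_cast hz
    rw [Complex.norm_def, h2, Real.sqrt_one]
  rcases mul_eq_zero.mp hcz with hc | hc
  · rcases mul_eq_zero.mp hdz with hd | hd
    · -- c0 = 0, d0 = 0 : |⟨u,v⟩| = 1
      rw [hc] at huu; rw [hd] at huv hvv
      simp only [map_zero, zero_mul, mul_zero, zero_add, add_zero] at huu huv hvv
      rw [huv] at h1
      rw [norm_mul, Complex.norm_conj, habs _ huu.symm, habs _ hvv.symm] at h1
      norm_num at h1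
    · -- c0 = 0, d1 = 0 : ⟨u,v⟩ = 0
      have hd' : d1 = 0 := by simpa using congrArg C hd
      rw [hc, hd'] at huv
      simp only [map_zero, zero_mul, mul_zero, zero_add, add_zero] at huv
      rw [huv] at h0; simp at h0
  · have hc' : c1 = 0 := by simpa using congrArg C hc
    rcases mul_eq_zero.mp hdz with hd | hd
    · -- c1 = 0, d0 = 0 : ⟨u,v⟩ = 0
      rw [hc', hd] at huv
      simp only [map_zero, zero_mul, mul_zero, zero_add, add_zero] at huv
      rw [huv] at h0; simp at h0
    · -- c1 = 0, d1 = 0 : |⟨u,v⟩| = 1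
      have hd' : d1 = 0 := by simpa using congrArg C hd
      rw [hc'] at huu; rw [hd'] at huv hvv
      simp only [map_zero, zero_mul, mul_zero, zero_add, add_zero] at huu huv hvv
      rw [huv] at h1
      rw [norm_mul, Complex.norm_conj, habs _ huu.symm, habs _ hvv.symm] at h1
      norm_num at h1
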